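/- Let m₁ ≥ m₂ > 0 be integers with Euclidean sequence m_i (so m_{i+2} = m_i − ⌊m_i/m_{i+1}⌋·m_{i+1}, terminating at m_{k+1} = 0 with m_k = gcd(m₁,m₂)), and quotients q_i = ⌊m_i/m_{i+1}⌋. Then for every real l with m₂ < l ≤ m₁ + m₂ − gcd(m₁,m₂), there exist unique integers j, q with 1 ≤ j ≤ k−1 and 0 ≤ q ≤ q_j − 1 such that (m₁+m₂) − m_j + (q−1)·m_{j+1} < l ≤ (m₁+m₂) − m_j + q·m_{j+1}. -/

import Mathlib

/-- With the Euclidean sequence `m_i` (quotients `q_i = ⌊m_i/m_{i+1}⌋`,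
termination `m_{k+1} = 0`, `m_k = gcd(m₁,m₂)`), every real `l` with
`m₂ < l ≤ m₁ + m₂ − gcd(m₁,m₂)` lies in exactly one of the intervals
`((m₁+m₂) − m_j + (q−1) m_{j+1}, (m₁+m₂) − m_j + q m_{j+1}]` with
`1 ≤ j ≤ k−1`, `0 ≤ q ≤ q_j − 1`. -/
theorem stmt_5 (m : ℕ → ℕ) (h12 : m 2 ≤ m 1) (h2 : 0 < m 2)
    (hrec : ∀ i, 1 ≤ i → 0 < m (i + 1) →
      m (i + 2) = m i - (m i / m (i + 1)) * m (i + 1))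
    (k : ℕ) (hk : 1 ≤ k) (hk0 : m (k + 1) = 0)
    (hkpos : ∀ i, 1 ≤ i → i ≤ k → 0 < m i)
    (l : ℝ) (hl1 : (m 2 : ℝ) < l)
    (hl2 : l ≤ (m 1 : ℝ) + (m 2 : ℝ) - (Nat.gcd (m 1) (m 2) : ℝ)) :
    ∃! p : ℕ × ℕ, 1 ≤ p.1 ∧ p.1 ≤ k - 1 ∧ p.2 ≤ m p.1 / m (p.1 + 1) - 1 ∧
      ((m 1 : ℝ) + (m 2 : ℝ)) - (m p.1 : ℝ) + ((p.2 : ℝ) - 1) * (m (p.1 + 1) : ℝ) < l ∧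
      l ≤ ((m 1 : ℝ) + (m 2 : ℝ)) - (m p.1 : ℝ) + (p.2 : ℝ) * (m (p.1 + 1) : ℝ) := by
  classical
  have hk2 : 2 ≤ k := by
    by_contra h
    push_neg at h
    have hk1 : k = 1 := by omega
    subst hk1
    norm_num at hk0
    omega
  -- modular recursion
  have hmod : ∀ i, 1 ≤ i → i + 1 ≤ k → m (i + 2) = m i % m (i + 1) := by
    intro i h1 h2'
    have hp := hkpos (i + 1) (by omega) h2'
    have h3 := hrec i h1 hp
    have h4 := Nat.mod_add_div' (m i) (m (i + 1))
    omega
  have hdec : ∀ i, 1 ≤ i → i + 1 ≤ k → m (i + 2) < m (i + 1) := by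
    intro i h1 h2'
    rw [hmod i h1 h2']
    exact Nat.mod_lt _ (hkpos (i + 1) (by omega) h2')
  have hmono : ∀ i, 1 ≤ i → i ≤ k → m (i + 1) ≤ m i := by
    intro i h1 hik
    rcases Nat.lt_or_ge i 2 with h | h
    · have hi1 : i = 1 := by omega
      subst hi1
      exact h12
    · obtain ⟨t, rfl⟩ : ∃ t, i = t + 2 := ⟨i - 2, by omega⟩
      have h5 := hdec (t + 1) (by omega) (by omega)
      have e : t + 1 + 2 = t + 2 + 1 := by omega
      have e2 : t + 1 + 1 = t + 2 := by omega
      rw [e, e2] at h5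
      exact h5.le
  -- gcd invariance
  have hgcdi : ∀ i, 1 ≤ i → i ≤ k → Nat.gcd (m i) (m (i + 1)) = Nat.gcd (m 1) (m 2) := by
    intro i
    induction i with
    | zero => omega
    | succ n ih =>
      intro h1 hk'
      rcases Nat.lt_or_ge n 1 with h | h
      · have : n = 0 := by omega
        subst this
        rfl
      · have hr := hmod n h (by omega)
        have e : n + 2 = n + 1 + 1 := by omega
        rw [← e, hr, Nat.gcd_comm, ← Nat.gcd_rec, Nat.gcd_comm]
        exact ih h (by omega)
  have hgcd : (m k : ℕ) = Nat.gcd (m 1) (m 2) := by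
    have h6 := hgcdi k hk le_rfl
    rwa [hk0, Nat.gcd_zero_right] at h6
  -- real block endpoints
  set S : ℝ := (m 1 : ℝ) + (m 2 : ℝ) with hS
  set B : ℕ → ℝ := fun j => S - (m j : ℝ) - (m (j + 1) : ℝ) with hB
  have hBstep : ∀ j, 1 ≤ j → j + 1 ≤ k → B j ≤ B (j + 1) := by
    intro j h1 h2'
    have hmm : m (j + 2) ≤ m j :=
      le_trans (hdec j h1 h2').le (hmono j h1 (by omega))
    simp only [hB]
    have e : j + 1 + 1 = j + 2 := by omega
    rw [e]
    have : (m (j + 2) : ℝ) ≤ (m j : ℝ) := by exact_mod_cast hmm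
    linarith
  have hBmono : ∀ b a, 1 ≤ a → a ≤ b → b ≤ k → B a ≤ B b := by
    intro b
    induction b with
    | zero => intro a h1 h2' h3; omega
    | succ n ih =>
      intro a h1 h2' h3
      rcases Nat.eq_or_lt_of_le h2' with h | h
      · rw [h]
      · exact le_trans (ih a h1 (by omega) (by omega)) (hBstep n (by omega) h3)
  -- division identity
  have hdiv : ∀ j, 1 ≤ j → j + 1 ≤ k → m j = (m j / m (j + 1)) * m (j + 1) + m (j + 2) := by
    intro j h1 h2'
    have h4 := Nat.mod_add_div' (m j) (m (j + 1))
    have h5 := hmod j h1 h2'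
    omega
  have hq1 : ∀ j, 1 ≤ j → j + 1 ≤ k → 1 ≤ m j / m (j + 1) := by
    intro j h1 h2'
    exact (Nat.one_le_div_iff (hkpos (j + 1) (by omega) h2')).mpr (hmono j h1 (by omega))
  -- block endpoint identity
  have hBe : ∀ j, 1 ≤ j → j + 1 ≤ k →
      B (j + 1) = S - (m j : ℝ) + (((m j / m (j + 1) : ℕ) : ℝ) - 1) * (m (j + 1) : ℝ) := by
    intro j h1 h2'
    have h4 := hdiv j h1 h2'
    have h5 : (m j : ℝ) = ((m j / m (j + 1) : ℕ) : ℝ) * (m (j + 1) : ℝ) + (m (j + 2) : ℝ) := by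
      exact_mod_cast congrArg (Nat.cast : ℕ → ℝ) h4
    simp only [hB]
    have e : j + 1 + 1 = j + 2 := by omega
    rw [e]
    linarith [h5]
  have hB1 : B 1 = 0 := by
    simp only [hB, hS]
    ring
  -- existence of block index
  have hPk : l ≤ B (k - 2 + 2) := by
    have e : k - 2 + 2 = k := by omega
    rw [e]
    simp only [hB]
    rw [hk0]
    push_cast
    rw [← hgcd] at hl2
    simp only [hS]
    linarith
  have hPex : ∃ n : ℕ, l ≤ B (n + 2) := ⟨k - 2, hPk⟩
  have hnk : Nat.find hPex ≤ k - 2 := Nat.find_le hPk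
  have hup0 : l ≤ B (Nat.find hPex + 1 + 1) := by
    have e : Nat.find hPex + 1 + 1 = Nat.find hPex + 2 := rfl
    rw [e]
    exact Nat.find_spec hPex
  have hlo0 : B (Nat.find hPex + 1) < l := by
    rcases Nat.eq_zero_or_pos (Nat.find hPex) with h | h
    · have e : Nat.find hPex + 1 = 1 := by omega
      rw [e, hB1]
      have : (0 : ℝ) < (m 2 : ℝ) := by exact_mod_cast h2
      linarith
    · have hmin := Nat.find_min hPex (m := Nat.find hPex - 1) (by omega)
      push_neg at hmin
      have e : Nat.find hPex - 1 + 2 = Nat.find hPex + 1 := by omega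
      rwa [e] at hmin
  set j := Nat.find hPex + 1 with hj
  have hjk : j ≤ k - 1 := by omega
  have hup : l ≤ B (j + 1) := hup0
  have hlo : B j < l := hlo0
  have hjk' : j + 1 ≤ k := by omega
  have hj1 : 1 ≤ j := by omega
  -- existence of q
  have hcast : ((m j / m (j + 1) - 1 : ℕ) : ℝ) = ((m j / m (j + 1) : ℕ) : ℝ) - 1 := by
    have := hq1 j hj1 hjk'
    push_cast [Nat.cast_sub this]
    ring
  have hQk : l ≤ S - (m j : ℝ) + ((m j / m (j + 1) - 1 : ℕ) : ℝ) * (m (j + 1) : ℝ) := by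
    rw [hcast, ← hBe j hj1 hjk']
    exact hup
  have hQex : ∃ q : ℕ, l ≤ S - (m j : ℝ) + (q : ℝ) * (m (j + 1) : ℝ) := ⟨_, hQk⟩
  have hqle : Nat.find hQex ≤ m j / m (j + 1) - 1 := Nat.find_le hQk
  have hqup : l ≤ S - (m j : ℝ) + ((Nat.find hQex : ℕ) : ℝ) * (m (j + 1) : ℝ) :=
    Nat.find_spec hQex
  have hqlo : S - (m j : ℝ) + (((Nat.find hQex : ℕ) : ℝ) - 1) * (m (j + 1) : ℝ) < l := by
    rcases Nat.eq_zero_or_pos (Nat.find hQex) with h | h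
    · rw [h]
      simp only [hB] at hlo
      push_cast
      linarith
    · have hmin := Nat.find_min hQex (m := Nat.find hQex - 1) (by omega)
      push_neg at hmin
      have hc2 : ((Nat.find hQex - 1 : ℕ) : ℝ) = ((Nat.find hQex : ℕ) : ℝ) - 1 := by
        push_cast [Nat.cast_sub h]
        ring
      rwa [hc2] at hmin
  set q := Nat.find hQex with hq
  -- block membership of an arbitrary valid pair
  have hblock : ∀ j' q' : ℕ, 1 ≤ j' → j' ≤ k - 1 → q' ≤ m j' / m (j' + 1) - 1 →
      S - (m j' : ℝ) + ((q' : ℝ) - 1) * (m (j' + 1) : ℝ) < l →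
      l ≤ S - (m j' : ℝ) + (q' : ℝ) * (m (j' + 1) : ℝ) →
      B j' < l ∧ l ≤ B (j' + 1) := by
    intro j' q' h1' h2' h3' h4' h5'
    have hjk1 : j' + 1 ≤ k := by omega
    have hmpos : (0 : ℝ) < (m (j' + 1) : ℝ) := by
      exact_mod_cast hkpos (j' + 1) (by omega) hjk1
    constructor
    · have hq0 : (0 : ℝ) ≤ (q' : ℝ) := Nat.cast_nonneg _
      have hm1 : (-1 : ℝ) * (m (j' + 1) : ℝ) ≤ ((q' : ℝ) - 1) * (m (j' + 1) : ℝ) :=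
        mul_le_mul_of_nonneg_right (by linarith) hmpos.le
      have hBj : B j' = S - (m j' : ℝ) - (m (j' + 1) : ℝ) := rfl
      rw [hBj]
      linarith
    · have hqj := hq1 j' h1' hjk1
      have hc : (q' : ℝ) ≤ ((m j' / m (j' + 1) : ℕ) : ℝ) - 1 := by
        have h6' : (q' : ℕ) ≤ m j' / m (j' + 1) - 1 := h3'
        have h6 : ((q' : ℕ) : ℝ) ≤ ((m j' / m (j' + 1) - 1 : ℕ) : ℝ) := by exact_mod_cast h6'
        rwa [Nat.cast_sub hqj, Nat.cast_one] at h6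
      have hm2 : (q' : ℝ) * (m (j' + 1) : ℝ) ≤
          (((m j' / m (j' + 1) : ℕ) : ℝ) - 1) * (m (j' + 1) : ℝ) :=
        mul_le_mul_of_nonneg_right hc hmpos.le
      rw [hBe j' h1' hjk1]
      linarith
  -- conclude
  refine ⟨⟨j, q⟩, ⟨hj1, hjk, hqle, hqlo, hqup⟩, ?_⟩
  rintro ⟨j', q'⟩ ⟨hj1', hjk'', hqle', hqlo', hqup'⟩
  simp only at hj1' hjk'' hqle' hqlo' hqup' ⊢
  have hb' := hblock j' q' hj1' hjk'' hqle' hqlo' hqup'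
  have hb := hblock j q hj1 hjk hqle hqlo hqup
  have hjj : j' = j := by
    by_contra hne
    rcases Nat.lt_or_ge j' j with h | h
    · have : B (j' + 1) ≤ B j := hBmono j (j' + 1) (by omega) (by omega) (by omega)
      linarith [hb'.2, hb.1]
    · have hlt : j < j' := by omega
      have : B (j + 1) ≤ B j' := hBmono j' (j + 1) (by omega) (by omega) (by omega)
      linarith [hb.2, hb'.1]
  subst hjj
  have hmpos : (0 : ℝ) < (m (j + 1) : ℝ) := by
    exact_mod_cast hkpos (j + 1) (by omega) (by omega)
  have hqq : q' = q := by
    have h7m : ((q' : ℝ) - 1) * (m (j + 1) : ℝ) < (q : ℝ) * (m (j + 1) : ℝ) := by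
      linarith [hqlo', hqup]
    have h8m : ((q : ℝ) - 1) * (m (j + 1) : ℝ) < (q' : ℝ) * (m (j + 1) : ℝ) := by
      linarith [hqlo, hqup']
    have h7 : (q' : ℝ) - 1 < (q : ℝ) := (mul_lt_mul_iff_of_pos_right hmpos).mp h7m
    have h8 : (q : ℝ) - 1 < (q' : ℝ) := (mul_lt_mul_iff_of_pos_right hmpos).mp h8m
    have hA : (q' : ℕ) < q + 1 := by
      exact_mod_cast (by push_cast; linarith : ((q' : ℕ) : ℝ) < ((q + 1 : ℕ) : ℝ))
    have hBq : (q : ℕ) < q' + 1 := by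
      exact_mod_cast (by push_cast; linarith : ((q : ℕ) : ℝ) < ((q' + 1 : ℕ) : ℝ))
    omega
  simp [hqq]
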